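/- Assume Assumption 1 holds. Let ν be a finite nonnegative Borel measure on 𝒮, and let (k(j))_{j≥1} and (n(j))_{j≥1} be increasing sequences of positive integers with k(j) → ∞ such that Σ_{j≥1} ν{ S ∈ 𝒮 ∖ ∪_{l≥1} W_l : inf_{w ∈ W_{k(j)}} ‖S − w‖_𝒮 ≤ 2δ_{n(j)} } < ∞. Then: (i) if C = Σ_{l=1}^{q} a_l Ψ_l with a_q ≠ 0 for some finite q ≥ 1, then with probability 1, for all sufficiently large j one has ι(Ĉ_{n(j)}, δ_{n(j)}) = q and q ≤ k(j) (so the procedure declares H_q eventually); (ii) there exists a ν-negligible set N₀ ⊆ 𝒮 such that whenever ⟨C, Ψ_l⟩_𝒮 ≠ 0 for infinitely many l and C ∉ N₀, with probability 1, for all sufficiently large j one has ι(Ĉ_{n(j)}, δ_{n(j)}) > k(j) (so the procedure declares H_∞ eventually). -/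
import Mathlib


open MeasureTheory Filter
open scoped RealInnerProductSpace

variable {𝒮 : Type*} [NormedAddCommGroup 𝒮] [InnerProductSpace ℝ 𝒮]

/-- `P_j(S) = ∑_{l=1}^{j} ⟨S, Ψ_l⟩ Ψ_l`, the orthogonal projection of `S` onto
`W_j = span {Ψ_1, …, Ψ_j}` (indices `0, …, j-1` in `0`-indexed notation). -/
noncomputable def basisProj (Ψ : HilbertBasis ℕ ℝ 𝒮) (j : ℕ) (S : 𝒮) : 𝒮 :=
  ∑ l ∈ Finset.range j, ⟪S, Ψ l⟫ • Ψ l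

/-- `W_j = span {Ψ_1, …, Ψ_j}` (i.e. the span of `Ψ 0, …, Ψ (j-1)`). -/
def basisSpan (Ψ : HilbertBasis ℕ ℝ 𝒮) (j : ℕ) : Submodule ℝ 𝒮 :=
  Submodule.span ℝ ((fun l => Ψ l) '' Set.Iio j)

/-- `ι(S, δ) = min {j ≥ 1 : ‖S - P_j(S)‖_𝒮 < δ}`. -/
noncomputable def iotaDim (Ψ : HilbertBasis ℕ ℝ 𝒮) (S : 𝒮) (δ : ℝ) : ℕ :=
  sInf {j | 1 ≤ j ∧ ‖S - basisProj Ψ j S‖ < δ}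

lemma aux_inner_basisProj (Ψ : HilbertBasis ℕ ℝ 𝒮) (j m : ℕ) (S : 𝒮) :
    ⟪basisProj Ψ j S, Ψ m⟫ = if m < j then ⟪S, Ψ m⟫ else 0 := by
  unfold basisProj
  rw [sum_inner]
  have horth := orthonormal_iff_ite.mp Ψ.orthonormal
  simp only [real_inner_smul_left, horth, mul_ite, mul_one, mul_zero]
  rw [Finset.sum_ite_eq' (Finset.range j) m (fun l => ⟪S, Ψ l⟫)]
  simp [Finset.mem_range]

lemma aux_basisProj_sub (Ψ : HilbertBasis ℕ ℝ 𝒮) (j : ℕ) (S T : 𝒮) :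
    basisProj Ψ j (S - T) = basisProj Ψ j S - basisProj Ψ j T := by
  simp [basisProj, inner_sub_left, sub_smul, Finset.sum_sub_distrib]

lemma aux_inner_sub_basisProj (Ψ : HilbertBasis ℕ ℝ 𝒮) {j m : ℕ} (S : 𝒮) :
    ⟪S - basisProj Ψ j S, Ψ m⟫ = if m < j then 0 else ⟪S, Ψ m⟫ := by
  rw [inner_sub_left, aux_inner_basisProj]
  by_cases h : m < j <;> simp [h]

lemma aux_orth (Ψ : HilbertBasis ℕ ℝ 𝒮) (j : ℕ) (S : 𝒮) :
    ⟪S - basisProj Ψ j S, basisProj Ψ j S⟫ = 0 := by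
  unfold basisProj
  rw [inner_sum]
  refine Finset.sum_eq_zero fun l hl => ?_
  rw [real_inner_smul_right]
  have : ⟪S - basisProj Ψ j S, Ψ l⟫ = 0 := by
    rw [aux_inner_sub_basisProj]
    simp [Finset.mem_range.mp hl]
  rw [show (∑ l ∈ Finset.range j, ⟪S, Ψ l⟫ • Ψ l) = basisProj Ψ j S from rfl, this, mul_zero]

lemma aux_norm_sub_basisProj_le (Ψ : HilbertBasis ℕ ℝ 𝒮) (j : ℕ) (S : 𝒮) :
    ‖S - basisProj Ψ j S‖ ≤ ‖S‖ := by
  have h : ‖(S - basisProj Ψ j S) + basisProj Ψ j S‖ ^ 2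
      = ‖S - basisProj Ψ j S‖ ^ 2 + 2 * ⟪S - basisProj Ψ j S, basisProj Ψ j S⟫
        + ‖basisProj Ψ j S‖ ^ 2 := norm_add_sq_real _ _
  rw [sub_add_cancel, aux_orth] at h
  nlinarith [norm_nonneg (S - basisProj Ψ j S), norm_nonneg S, norm_nonneg (basisProj Ψ j S)]

lemma aux_abs_inner_le (Ψ : HilbertBasis ℕ ℝ 𝒮) {j m : ℕ} (h : j ≤ m) (S : 𝒮) :
    |⟪S, Ψ m⟫| ≤ ‖S - basisProj Ψ j S‖ := by
  have h1 : ⟪S - basisProj Ψ j S, Ψ m⟫ = ⟪S, Ψ m⟫ := by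
    rw [aux_inner_sub_basisProj]; simp [Nat.not_lt.mpr h]
  calc |⟪S, Ψ m⟫| = |⟪S - basisProj Ψ j S, Ψ m⟫| := by rw [h1]
    _ ≤ ‖S - basisProj Ψ j S‖ * ‖Ψ m‖ := abs_real_inner_le_norm _ _
    _ = ‖S - basisProj Ψ j S‖ := by rw [Ψ.orthonormal.1 m, mul_one]

lemma aux_tendsto_basisProj (Ψ : HilbertBasis ℕ ℝ 𝒮) (S : 𝒮) :
    Tendsto (fun j => basisProj Ψ j S) atTop (nhds S) := by
  have h := (Ψ.hasSum_repr S).tendsto_sum_nat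
  have he : (fun j => ∑ i ∈ Finset.range j, Ψ.repr S i • Ψ i) = fun j => basisProj Ψ j S := by
    funext j
    simp [basisProj, Ψ.repr_apply_apply, real_inner_comm]
  rwa [he] at h

lemma aux_basisProj_mem (Ψ : HilbertBasis ℕ ℝ 𝒮) {m j : ℕ} (h : m ≤ j) (S : 𝒮) :
    basisProj Ψ m S ∈ basisSpan Ψ j := by
  refine Submodule.sum_mem _ fun l hl => Submodule.smul_mem _ _ ?_
  exact Submodule.subset_span ⟨l, lt_of_lt_of_le (Finset.mem_range.mp hl) h, rfl⟩

lemma aux_inner_eq_zero_of_mem (Ψ : HilbertBasis ℕ ℝ 𝒮) {w : 𝒮} {l m : ℕ}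
    (hw : w ∈ basisSpan Ψ l) (hm : l ≤ m) : ⟪w, Ψ m⟫ = 0 := by
  induction hw using Submodule.span_induction with
  | mem x hx =>
    obtain ⟨i, hi, rfl⟩ := hx
    have hil := Set.mem_Iio.mp hi
    exact Ψ.orthonormal.2 (by omega : i ≠ m)
  | zero => simp
  | add x y _ _ hx hy => rw [inner_add_left, hx, hy, add_zero]
  | smul c x _ hx => rw [real_inner_smul_left, hx, mul_zero]

/-- **Theorem 2.**  Under Assumption 1, let `ν` be a finite (Borel) measure on
`𝒮` and let `k(j)`, `n(j)` be increasing sequences of positive integers with `k(j) → ∞`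
satisfying `∑_j ν {S ∈ 𝒮 ∖ ⋃_l W_l : inf_{w ∈ W_{k(j)}} ‖S - w‖ ≤ 2 δ_{n(j)}} < ∞`.
Then (i) if `C = ∑_{l=1}^{q} a_l Ψ_l` with `a_q ≠ 0` for some finite `q ≥ 1`, almost surely
`ι(Ĉ_{n(j)}, δ_{n(j)}) = q ≤ k(j)` for all large `j`; and (ii) there is a `ν`-negligible
`N₀ ⊆ 𝒮` such that if `⟨C, Ψ_l⟩ ≠ 0` for infinitely many `l` and `C ∉ N₀`, almost surely
`ι(Ĉ_{n(j)}, δ_{n(j)}) > k(j)` for all large `j`. -/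
theorem detection_of_finite_expressibility_in_given_basis
    {𝒮 : Type*} [NormedAddCommGroup 𝒮] [InnerProductSpace ℝ 𝒮]
    {Ω : Type*} [MeasurableSpace Ω] (ℙ : Measure Ω) [IsProbabilityMeasure ℙ]
    [MeasurableSpace 𝒮] [BorelSpace 𝒮]
    (Ψ : HilbertBasis ℕ ℝ 𝒮)
    (Chat : ℕ → Ω → 𝒮) (hChat : ∀ n, Measurable (Chat n))
    (C : 𝒮)
    (R : ℕ → ℝ) (hRpos : ∀ n, 0 < R n) (hRanti : StrictAnti R)
    (hRlim : Tendsto R atTop (nhds 0))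
    (hrate : ∀ᵐ ω ∂ℙ, ∀ᶠ n in atTop, ‖Chat n ω - C‖ < R n)
    (ε : ℝ) (hε : 0 < ε) (δ : ℕ → ℝ) (hδ : ∀ n, δ n = (1 + ε) * R n)
    (ν : Measure 𝒮) [IsFiniteMeasure ν]
    (n k : ℕ → ℕ) (hn : StrictMono n) (hkmono : Monotone k)
    (hktop : Tendsto k atTop atTop)
    (hn1 : ∀ j, 1 ≤ n j) (hk1 : ∀ j, 1 ≤ k j)
    (hsum : ∑' j, ν {S | (∀ l : ℕ, S ∉ basisSpan Ψ l) ∧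
      Metric.infDist S (basisSpan Ψ (k j) : Set 𝒮) ≤ 2 * δ (n j)} < ⊤) :
    (∀ q : ℕ, 1 ≤ q → ⟪C, Ψ (q - 1)⟫ ≠ 0 → (∀ l, q ≤ l → ⟪C, Ψ l⟫ = 0) →
      ∀ᵐ ω ∂ℙ, ∀ᶠ j in atTop,
        iotaDim Ψ (Chat (n j) ω) (δ (n j)) = q ∧ q ≤ k j) ∧
    (∃ N₀ : Set 𝒮, ν N₀ = 0 ∧
      ({l : ℕ | ⟪C, Ψ l⟫ ≠ 0}.Infinite → C ∉ N₀ →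
        ∀ᵐ ω ∂ℙ, ∀ᶠ j in atTop, k j < iotaDim Ψ (Chat (n j) ω) (δ (n j)))) := by
  constructor
  · -- Part (i)
    intro q hq1 hCq hCtail
    have hCfix : basisProj Ψ q C = C := by
      have h1 : HasSum (fun i => ⟪C, Ψ i⟫ • Ψ i) C := by
        have he : (fun i => ⟪C, Ψ i⟫ • Ψ i) = fun i => Ψ.repr C i • Ψ i := by
          funext i; rw [Ψ.repr_apply_apply, real_inner_comm]
        rw [he]; exact Ψ.hasSum_repr C
      have h2 : ∀ i ∉ Finset.range q, ⟪C, Ψ i⟫ • Ψ i = 0 := by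
        intro i hi
        rw [hCtail i (Nat.le_of_not_lt fun h => hi (Finset.mem_range.mpr h)), zero_smul]
      simp only [basisProj]
      have h3 := (hasSum_sum_of_ne_finset_zero h2).unique h1
      simpa using h3
    set a := |⟪C, Ψ (q - 1)⟫| with ha_def
    have ha : 0 < a := abs_pos.mpr hCq
    have hev1 : ∀ᶠ j in atTop, R (n j) < a / (2 + ε) :=
      (hRlim.comp hn.tendsto_atTop).eventually_lt_const (by positivity)
    have hev2 : ∀ᶠ j in atTop, q ≤ k j := hktop.eventually_ge_atTop q
    filter_upwards [hrate] with ω hω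
    have hev3 : ∀ᶠ j in atTop, ‖Chat (n j) ω - C‖ < R (n j) := hn.tendsto_atTop.eventually hω
    filter_upwards [hev1, hev2, hev3] with j hj1 hj2 hj3
    refine ⟨?_, hj2⟩
    set S := Chat (n j) ω with hS
    have hR := hRpos (n j)
    have hδR : R (n j) < δ (n j) := by rw [hδ]; nlinarith
    have hj1' : R (n j) * (2 + ε) < a := (lt_div_iff₀ (by positivity)).mp hj1
    have hq_mem : q ∈ {m | 1 ≤ m ∧ ‖S - basisProj Ψ m S‖ < δ (n j)} := by
      refine ⟨hq1, ?_⟩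
      have hsp : S - basisProj Ψ q S = (S - C) - basisProj Ψ q (S - C) := by
        rw [aux_basisProj_sub, hCfix]; abel
      rw [hsp]
      calc ‖(S - C) - basisProj Ψ q (S - C)‖ ≤ ‖S - C‖ := aux_norm_sub_basisProj_le Ψ q (S - C)
        _ < R (n j) := hj3
        _ < δ (n j) := hδR
    have hlow : ∀ m ∈ {m | 1 ≤ m ∧ ‖S - basisProj Ψ m S‖ < δ (n j)}, q ≤ m := by
      rintro m ⟨hm1, hm2⟩
      by_contra hlt
      push_neg at hlt
      have hmq : m ≤ q - 1 := by omega
      have h1 : a ≤ ‖C - basisProj Ψ m C‖ := aux_abs_inner_le Ψ hmq C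
      have hsplit : C - basisProj Ψ m C
          = (S - basisProj Ψ m S) - ((S - C) - basisProj Ψ m (S - C)) := by
        rw [aux_basisProj_sub]; abel
      have h2 : ‖(S - C) - basisProj Ψ m (S - C)‖ ≤ ‖S - C‖ :=
        aux_norm_sub_basisProj_le Ψ m (S - C)
      have h3 : ‖C - basisProj Ψ m C‖
          ≤ ‖S - basisProj Ψ m S‖ + ‖(S - C) - basisProj Ψ m (S - C)‖ := by
        rw [hsplit]; exact norm_sub_le _ _
      rw [hδ] at hm2
      nlinarith
    simp only [iotaDim]
    exact le_antisymm (Nat.sInf_le hq_mem) (hlow _ (Nat.sInf_mem ⟨q, hq_mem⟩))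
  · -- Part (ii)
    refine ⟨limsup (fun j => {S | (∀ l : ℕ, S ∉ basisSpan Ψ l) ∧
        Metric.infDist S (basisSpan Ψ (k j) : Set 𝒮) ≤ 2 * δ (n j)}) atTop,
      measure_limsup_atTop_eq_zero hsum.ne, ?_⟩
    intro hinf hCN
    have hCnot : ∀ l, C ∉ basisSpan Ψ l := by
      intro l hl
      obtain ⟨m, hm, hlm⟩ := hinf.exists_gt l
      exact hm (aux_inner_eq_zero_of_mem Ψ hl hlm.le)
    rw [mem_limsup_iff_frequently_mem, not_frequently] at hCN
    have hCfar : ∀ᶠ j in atTop,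
        2 * δ (n j) < Metric.infDist C (basisSpan Ψ (k j) : Set 𝒮) := by
      filter_upwards [hCN] with j hj
      simp only [Set.mem_setOf_eq, not_and] at hj
      exact lt_of_not_ge (hj hCnot)
    filter_upwards [hrate] with ω hω
    have hev3 : ∀ᶠ j in atTop, ‖Chat (n j) ω - C‖ < R (n j) := hn.tendsto_atTop.eventually hω
    filter_upwards [hCfar, hev3] with j hj1 hj3
    set S := Chat (n j) ω with hS
    have hR := hRpos (n j)
    have hδpos : 0 < δ (n j) := by rw [hδ]; positivity
    have hδR : R (n j) < δ (n j) := by rw [hδ]; nlinarith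
    have hne : {m | 1 ≤ m ∧ ‖S - basisProj Ψ m S‖ < δ (n j)}.Nonempty := by
      have ht : Tendsto (fun m => ‖S - basisProj Ψ m S‖) atTop (nhds 0) := by
        have h := (tendsto_const_nhds (x := S) (f := atTop)).sub (aux_tendsto_basisProj Ψ S)
        simpa using h.norm
      obtain ⟨m, hm1, hm2⟩ := ((ht.eventually_lt_const hδpos).and (eventually_ge_atTop 1)).exists
      exact ⟨m, hm2, hm1⟩
    have hgt : ∀ m ∈ {m | 1 ≤ m ∧ ‖S - basisProj Ψ m S‖ < δ (n j)}, k j < m := by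
      rintro m ⟨hm1, hm2⟩
      by_contra hle
      push_neg at hle
      have hmem : basisProj Ψ m S ∈ (basisSpan Ψ (k j) : Set 𝒮) := aux_basisProj_mem Ψ hle S
      have h1 : Metric.infDist S (basisSpan Ψ (k j) : Set 𝒮) ≤ ‖S - basisProj Ψ m S‖ := by
        simpa [dist_eq_norm] using Metric.infDist_le_dist_of_mem hmem
      have h2 : Metric.infDist C (basisSpan Ψ (k j) : Set 𝒮) ≤
          Metric.infDist S (basisSpan Ψ (k j) : Set 𝒮) + dist C S :=
        Metric.infDist_le_infDist_add_dist
      have h3 : dist C S < δ (n j) := by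
        rw [dist_eq_norm, norm_sub_rev]; exact hj3.trans hδR
      linarith
    simp only [iotaDim]
    exact hgt _ (Nat.sInf_mem hne)
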